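/- Let X be an absolutely continuous nonnegative random variable with finite second moment, pdf f and cdf F with F(x) > 0 for all x > 0, and define the sequence F_1 = F, f_1 = f, T_n(x) = −log F_n(x), F_{n+1}(x) = F_n(x)(1 + T_n(x)), f_{n+1}(x) = T_n(x)·f_n(x), with mean inactivity time μ̃_n(t) = (1/F_n(t))·∫_0^t F_n(x) dx. Consider the pair (X_n, X_{n+1}) with joint law given by [X_{n+1} | X_n = t] =_d [X_n | X_n ≤ t], so that E[X_n·X_{n+1}] = ∫_0^∞ t·(t − μ̃_n(t))·f_n(t) dt. Then for every n = 1, 2, …, Cov(X_n, X_{n+1}) = Var(X_n) − Cov(X_n, μ̃_n(X_n)), where Cov(X_n, X_{n+1}) = E[X_n·X_{n+1}] − E(X_n)·E(X_{n+1}), Cov(X_n, μ̃_n(X_n)) = E[X_n·μ̃_n(X_n)] − E(X_n)·E[μ̃_n(X_n)], and E(X_{n+1}) = E(X_n) − CE(X_n) with CE(X_n) = −∫_0^∞ F_n(x)·log F_n(x) dx = E[μ̃_n(X_n)]. -/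

import Mathlib

open MeasureTheory Set Filter Topology

lemma neg_mul_log_le {y : ℝ} (h0 : 0 < y) : y * (-Real.log y) ≤ 1 - y := by
  have h := Real.log_le_sub_one_of_pos (x := y⁻¹) (by positivity)
  rw [Real.log_inv] at h
  have h2 := mul_le_mul_of_nonneg_left h h0.le
  have h3 : y * y⁻¹ = 1 := mul_inv_cancel₀ h0.ne'
  nlinarith

lemma gfun_mono {y z : ℝ} (h0 : 0 < y) (hyz : y ≤ z) (hz : z ≤ 1) :
    y * (1 - Real.log y) ≤ z * (1 - Real.log z) := by
  have hz0 : 0 < z := lt_of_lt_of_le h0 hyz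
  have h := Real.log_le_sub_one_of_pos (x := z / y) (by positivity)
  rw [Real.log_div hz0.ne' h0.ne'] at h
  have h2 := mul_le_mul_of_nonneg_left h h0.le
  have h3 : y * (z / y) = z := by field_simp
  have h4 : Real.log z ≤ 0 := Real.log_nonpos hz0.le hz
  nlinarith

section Key

variable (Ft ft : ℝ → ℝ)

/-- All the basic facts about the pair (Ft, ft) we carry through the induction. -/
structure GoodPair : Prop where
  pos : ∀ x, 0 < x → 0 < Ft x
  le1 : ∀ x, 0 < x → Ft x ≤ 1
  deriv : ∀ x, 0 < x → HasDerivAt Ft (ft x) x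
  fnn : ∀ x, 0 < x → 0 ≤ ft x
  mono : ∀ x y, 0 < x → x ≤ y → Ft x ≤ Ft y
  meas : AEMeasurable ft (volume.restrict (Ioi 0))
  lim : Tendsto Ft atTop (nhds 1)

variable {Ft ft}

lemma GoodPair.contOn (hg : GoodPair Ft ft) : ContinuousOn Ft (Ioi 0) :=
  fun t ht => (hg.deriv t ht).continuousAt.continuousWithinAt

lemma GoodPair.intOn (hg : GoodPair Ft ft) (t : ℝ) : IntegrableOn Ft (Ioc 0 t) := by
  refine Integrable.mono' (integrable_const 1)
    (((hg.contOn.mono Ioc_subset_Ioi_self).aemeasurable measurableSet_Ioc).aestronglyMeasurable) ?_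
  filter_upwards [ae_restrict_mem measurableSet_Ioc] with x hx
  rw [Real.norm_eq_abs, abs_of_nonneg (hg.pos x hx.1).le]
  exact hg.le1 x hx.1

lemma GoodPair.ii (hg : GoodPair Ft ft) {t : ℝ} (ht : 0 ≤ t) :
    IntervalIntegrable Ft volume 0 t :=
  (intervalIntegrable_iff_integrableOn_Ioc_of_le ht).mpr (hg.intOn t)

lemma GoodPair.hG' (hg : GoodPair Ft ft) {t : ℝ} (ht : 0 < t) :
    HasDerivAt (fun u => ∫ y in (0:ℝ)..u, Ft y) (Ft t) t :=
  intervalIntegral.integral_hasDerivAt_right (hg.ii ht.le)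
    (hg.contOn.stronglyMeasurableAtFilter isOpen_Ioi t ht) (hg.deriv t ht).continuousAt

lemma GoodPair.G_nonneg (hg : GoodPair Ft ft) {t : ℝ} (ht : 0 < t) :
    0 ≤ ∫ y in (0:ℝ)..t, Ft y := by
  rw [intervalIntegral.integral_of_le ht.le]
  exact setIntegral_nonneg measurableSet_Ioc fun x hx => (hg.pos x hx.1).le

lemma GoodPair.G_le (hg : GoodPair Ft ft) {t : ℝ} (ht : 0 < t) :
    (∫ y in (0:ℝ)..t, Ft y) ≤ t * Ft t := by
  rw [intervalIntegral.integral_of_le ht.le]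
  have h := setIntegral_mono_on (hg.intOn t) (integrableOn_const (by simp) (by simp) : IntegrableOn (fun _ => Ft t) (Ioc 0 t))
    measurableSet_Ioc (fun x hx => hg.mono x t hx.1 hx.2)
  simpa [Real.volume_Ioc, ENNReal.toReal_ofReal ht.le, max_eq_left ht.le] using h

/-- `0 ≤ μ̃(t) ≤ t`. -/
lemma GoodPair.mu_nonneg (hg : GoodPair Ft ft) {t : ℝ} (ht : 0 < t) :
    0 ≤ (1 / Ft t) * ∫ y in (0:ℝ)..t, Ft y :=
  mul_nonneg (by have := hg.pos t ht; positivity) (hg.G_nonneg ht)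

lemma GoodPair.mu_le (hg : GoodPair Ft ft) {t : ℝ} (ht : 0 < t) :
    (1 / Ft t) * (∫ y in (0:ℝ)..t, Ft y) ≤ t := by
  have hF := hg.pos t ht
  have h := hg.G_le ht
  rw [div_mul_eq_mul_div, one_mul, div_le_iff₀ hF]
  linarith

lemma GoodPair.mu_contOn (hg : GoodPair Ft ft) :
    ContinuousOn (fun t => (1 / Ft t) * ∫ y in (0:ℝ)..t, Ft y) (Ioi 0) := by
  refine ContinuousOn.mul (continuousOn_const.div hg.contOn fun t ht => (hg.pos t ht).ne') ?_
  exact fun t ht => (hg.hG' ht).continuousAt.continuousWithinAt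

lemma GoodPair.muf_int (hg : GoodPair Ft ft)
    (hmean : IntegrableOn (fun x => x * ft x) (Ioi 0)) :
    IntegrableOn (fun t => ((1 / Ft t) * ∫ y in (0:ℝ)..t, Ft y) * ft t) (Ioi 0) := by
  refine hmean.mono' (((hg.mu_contOn.aemeasurable measurableSet_Ioi).mul
    hg.meas).aestronglyMeasurable) ?_
  filter_upwards [ae_restrict_mem measurableSet_Ioi] with t ht
  rw [Real.norm_eq_abs, abs_of_nonneg (mul_nonneg (hg.mu_nonneg ht) (hg.fnn t ht))]
  exact mul_le_mul_of_nonneg_right (hg.mu_le ht) (hg.fnn t ht)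

lemma GoodPair.tmuf_int (hg : GoodPair Ft ft)
    (hmom2 : IntegrableOn (fun x => x ^ 2 * ft x) (Ioi 0)) :
    IntegrableOn (fun t => t * ((1 / Ft t) * ∫ y in (0:ℝ)..t, Ft y) * ft t) (Ioi 0) := by
  refine hmom2.mono' (((measurable_id.aemeasurable.mul
    (hg.mu_contOn.aemeasurable measurableSet_Ioi)).mul hg.meas).aestronglyMeasurable) ?_
  filter_upwards [ae_restrict_mem measurableSet_Ioi] with t ht
  have ht' : (0:ℝ) < t := ht
  rw [Real.norm_eq_abs, abs_of_nonneg
    (mul_nonneg (mul_nonneg ht'.le (hg.mu_nonneg ht)) (hg.fnn t ht))]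
  have : t * ((1 / Ft t) * ∫ y in (0:ℝ)..t, Ft y) ≤ t * t :=
    mul_le_mul_of_nonneg_left (hg.mu_le ht) ht'.le
  calc t * ((1 / Ft t) * ∫ y in (0:ℝ)..t, Ft y) * ft t
      ≤ t * t * ft t := mul_le_mul_of_nonneg_right this (hg.fnn t ht)
    _ = t ^ 2 * ft t := by ring

end Key

section KeyMain

variable {Ft ft : ℝ → ℝ}

/-- CDF from density on the tail: `∫_{Ioi b} ft = 1 - Ft b`. -/
lemma GoodPair.tail_int (hg : GoodPair Ft ft)
    (hmean : IntegrableOn (fun x => x * ft x) (Ioi 0)) {b : ℝ} (hb : 0 < b) :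
    IntegrableOn ft (Ioi b) := by
  have hsub : Ioi b ⊆ Ioi (0:ℝ) := Ioi_subset_Ioi hb.le
  refine Integrable.mono' (((hmean.mono_set hsub)).const_mul b⁻¹)
    ((hg.meas.mono_measure (Measure.restrict_mono hsub le_rfl)).aestronglyMeasurable) ?_
  filter_upwards [ae_restrict_mem measurableSet_Ioi] with t ht
  have ht0 : (0:ℝ) < t := lt_trans hb ht
  rw [Real.norm_eq_abs, abs_of_nonneg (hg.fnn t ht0)]
  have h1 : b * ft t ≤ t * ft t := mul_le_mul_of_nonneg_right (le_of_lt ht) (hg.fnn t ht0)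
  calc ft t = b⁻¹ * (b * ft t) := by field_simp
    _ ≤ b⁻¹ * (t * ft t) := mul_le_mul_of_nonneg_left h1 (by positivity)

lemma GoodPair.tail_cdf (hg : GoodPair Ft ft)
    (hmean : IntegrableOn (fun x => x * ft x) (Ioi 0)) {b : ℝ} (hb : 0 < b) :
    ∫ t in Ioi b, ft t = 1 - Ft b := by
  have h1 : Tendsto (fun c => ∫ t in b..c, ft t) atTop (𝓝 (∫ t in Ioi b, ft t)) :=
    intervalIntegral_tendsto_integral_Ioi b (hg.tail_int hmean hb) tendsto_id
  have h2 : ∀ᶠ c in atTop, (∫ t in b..c, ft t) = Ft c - Ft b := by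
    filter_upwards [eventually_ge_atTop b] with c hc
    refine intervalIntegral.integral_eq_sub_of_hasDerivAt (fun t ht => ?_) ?_
    · rw [uIcc_of_le hc] at ht
      exact hg.deriv t (lt_of_lt_of_le hb ht.1)
    · exact (intervalIntegrable_iff_integrableOn_Ioc_of_le hc).mpr
        ((hg.tail_int hmean hb).mono_set Ioc_subset_Ioi_self)
  have h3 : Tendsto (fun c => Ft c - Ft b) atTop (𝓝 (1 - Ft b)) := hg.lim.sub_const _
  exact tendsto_nhds_unique h1 (Filter.Tendsto.congr' (EventuallyEq.symm h2) h3)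

end KeyMain

section KeyMain2

variable {Ft ft : ℝ → ℝ}

lemma GoodPair.CE_eq (hg : GoodPair Ft ft)
    (hmean : IntegrableOn (fun x => x * ft x) (Ioi 0))
    (hCE : IntegrableOn (fun x => Ft x * Real.log (Ft x)) (Ioi 0)) :
    (∫ t in Ioi 0, ((1 / Ft t) * ∫ y in (0:ℝ)..t, Ft y) * ft t)
      = -∫ x in Ioi 0, Ft x * Real.log (Ft x) := by
  set H : ℝ → ℝ := fun t => (-Real.log (Ft t)) * ∫ y in (0:ℝ)..t, Ft y with hHdef
  set g : ℝ → ℝ :=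
    fun t => -(Ft t * Real.log (Ft t)) - ((1 / Ft t) * ∫ y in (0:ℝ)..t, Ft y) * ft t with hgdef
  have hH' : ∀ t, 0 < t → HasDerivAt H (g t) t := by
    intro t ht
    have hFt := hg.pos t ht
    have hlog : HasDerivAt (fun x => -Real.log (Ft x)) (-(ft t / Ft t)) t :=
      ((hg.deriv t ht).log hFt.ne').neg
    have h := hlog.mul (hg.hG' ht)
    refine h.congr_deriv ?_
    rw [hgdef]
    field_simp
    ring
  have hgint : IntegrableOn g (Ioi 0) := (hCE.neg).sub (hg.muf_int hmean)
  have hftc : ∀ a b : ℝ, 0 < a → a ≤ b → (∫ t in a..b, g t) = H b - H a := by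
    intro a b ha hab
    refine intervalIntegral.integral_eq_sub_of_hasDerivAt (fun t ht => ?_) ?_
    · rw [uIcc_of_le hab] at ht; exact hH' t (lt_of_lt_of_le ha ht.1)
    · exact (intervalIntegrable_iff_integrableOn_Ioc_of_le hab).mpr
        (hgint.mono_set fun x hx => lt_trans ha hx.1)
  have hHnn : ∀ t, 0 < t → 0 ≤ H t := fun t ht =>
    mul_nonneg (neg_nonneg.2 (Real.log_nonpos (hg.pos t ht).le (hg.le1 t ht))) (hg.G_nonneg ht)
  have hHle : ∀ t, 0 < t → H t ≤ t * (1 - Ft t) := by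
    intro t ht
    have hltn : 0 ≤ -Real.log (Ft t) :=
      neg_nonneg.2 (Real.log_nonpos (hg.pos t ht).le (hg.le1 t ht))
    have h1 : H t ≤ (-Real.log (Ft t)) * (t * Ft t) :=
      mul_le_mul_of_nonneg_left (hg.G_le ht) hltn
    have h2 : Ft t * (-Real.log (Ft t)) ≤ 1 - Ft t := neg_mul_log_le (hg.pos t ht)
    nlinarith [ht.le]
  have htail : Tendsto (fun b => ∫ t in Ioi b, t * ft t) atTop (𝓝 0) := by
    have h1 : Tendsto (fun b => ∫ t in (0:ℝ)..b, t * ft t) atTop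
        (𝓝 (∫ t in Ioi 0, t * ft t)) :=
      intervalIntegral_tendsto_integral_Ioi 0 hmean tendsto_id
    have h2 : (fun b => ∫ t in Ioi b, t * ft t) =ᶠ[atTop]
        fun b => (∫ t in Ioi 0, t * ft t) - ∫ t in (0:ℝ)..b, t * ft t := by
      filter_upwards [eventually_gt_atTop 0] with b hb
      have hu : Ioc 0 b ∪ Ioi b = Ioi (0:ℝ) := Ioc_union_Ioi_eq_Ioi hb.le
      have hsum := setIntegral_union (Ioc_disjoint_Ioi le_rfl) measurableSet_Ioi
        (hmean.mono_set (hu ▸ subset_union_left)) (hmean.mono_set (hu ▸ subset_union_right))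
      rw [hu] at hsum
      rw [intervalIntegral.integral_of_le hb.le]
      linarith [hsum]
    have h3 : Tendsto (fun b => (∫ t in Ioi 0, t * ft t) - ∫ t in (0:ℝ)..b, t * ft t) atTop
        (𝓝 ((∫ t in Ioi 0, t * ft t) - ∫ t in Ioi 0, t * ft t)) := tendsto_const_nhds.sub h1
    rw [sub_self] at h3
    exact Filter.Tendsto.congr' h2.symm h3
  have hHtop : Tendsto H atTop (𝓝 0) := by
    refine tendsto_of_tendsto_of_tendsto_of_le_of_le' tendsto_const_nhds htail ?_ ?_
    · filter_upwards [eventually_gt_atTop 0] with b hb; exact hHnn b hb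
    · filter_upwards [eventually_gt_atTop 0] with b hb
      have hb1 : b * (1 - Ft b) = ∫ t in Ioi b, b * ft t := by
        rw [integral_const_mul, hg.tail_cdf hmean hb]
      have hb2 : (∫ t in Ioi b, b * ft t) ≤ ∫ t in Ioi b, t * ft t := by
        refine setIntegral_mono_on ((hg.tail_int hmean hb).const_mul b)
          (hmean.mono_set (Ioi_subset_Ioi hb.le)) measurableSet_Ioi (fun t ht => ?_)
        exact mul_le_mul_of_nonneg_right (le_of_lt ht) (hg.fnn t (lt_trans hb ht))
      linarith [hHle b hb]
  have hIa : ∀ a, 0 < a → (∫ t in Ioi a, g t) = - H a := by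
    intro a ha
    have h1 := intervalIntegral_tendsto_integral_Ioi a
      (hgint.mono_set (Ioi_subset_Ioi ha.le)) tendsto_id
    have h2 : (fun b => ∫ t in a..b, g t) =ᶠ[atTop] fun b => H b - H a := by
      filter_upwards [eventually_ge_atTop a] with b hb; exact hftc a b ha hb
    have h3 : Tendsto (fun b => H b - H a) atTop (𝓝 (0 - H a)) := hHtop.sub_const _
    rw [zero_sub] at h3
    exact tendsto_nhds_unique h1 (Filter.Tendsto.congr' h2.symm h3)
  have h0 : (∫ t in Ioi 0, g t) = 0 := by
    have hmonoS : Monotone (fun k : ℕ => Ioi (1 / (k + 1 : ℝ))) := by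
      intro k l hkl
      apply Ioi_subset_Ioi
      have hk : (k : ℝ) ≤ l := Nat.cast_le.2 hkl
      apply one_div_le_one_div_of_le (by positivity)
      linarith
    have hU : (⋃ k : ℕ, Ioi (1 / (k + 1 : ℝ))) = Ioi (0 : ℝ) := by
      ext x
      simp only [mem_iUnion, mem_Ioi]
      constructor
      · rintro ⟨k, hk⟩; exact lt_trans (by positivity) hk
      · intro hx; exact exists_nat_one_div_lt hx
    have h1 := tendsto_setIntegral_of_monotone (fun k : ℕ => measurableSet_Ioi) hmonoS
      (hU ▸ hgint)
    rw [hU] at h1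
    have h2 : ∀ k : ℕ, (∫ t in Ioi (1 / (k + 1 : ℝ)), g t) = - H (1 / (k + 1 : ℝ)) :=
      fun k => hIa _ (by positivity)
    have h3 : Tendsto (fun k : ℕ => - H (1 / (k + 1 : ℝ))) atTop (𝓝 0) := by
      rw [show (0:ℝ) = -0 by ring]
      refine Tendsto.neg ?_
      refine tendsto_of_tendsto_of_tendsto_of_le_of_le
        (tendsto_const_nhds : Tendsto (fun _ : ℕ => (0:ℝ)) atTop (𝓝 0))
        tendsto_one_div_add_atTop_nhds_zero_nat
        (fun k => hHnn _ (by positivity)) (fun k => ?_)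
      have hk : (0:ℝ) < 1 / (k + 1 : ℝ) := by positivity
      have := hHle _ hk
      have hFk : 0 < Ft (1 / (k + 1 : ℝ)) := hg.pos _ hk
      nlinarith
    exact tendsto_nhds_unique h1 (Tendsto.congr (fun k => (h2 k).symm) h3)
  have h1 : (∫ t in Ioi 0, (-(Ft t * Real.log (Ft t))
        - (1 / Ft t * ∫ y in (0:ℝ)..t, Ft y) * ft t))
      = (∫ t in Ioi 0, -(Ft t * Real.log (Ft t)))
        - ∫ t in Ioi 0, (1 / Ft t * ∫ y in (0:ℝ)..t, Ft y) * ft t :=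
    integral_sub hCE.neg (hg.muf_int hmean)
  rw [integral_neg] at h1
  have h0' : (∫ t in Ioi 0, (-(Ft t * Real.log (Ft t))
      - (1 / Ft t * ∫ y in (0:ℝ)..t, Ft y) * ft t)) = 0 := h0
  rw [h1] at h0'
  linarith

end KeyMain2

lemma goodpair_all (F f : ℝ → ℝ) (Fn fn : ℕ → ℝ → ℝ)
    (hderiv : ∀ x, 0 < x → HasDerivAt F (f x) x)
    (hf : ∀ x, 0 ≤ f x) (hfm : Measurable f)
    (hFmono : Monotone F)
    (hFpos : ∀ x, 0 < x → 0 < F x)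
    (hFle : ∀ x, F x ≤ 1)
    (hFlim : Tendsto F atTop (nhds 1))
    (hF1 : ∀ x, Fn 1 x = F x)
    (hf1 : ∀ x, fn 1 x = f x)
    (hFrec : ∀ n, 1 ≤ n → ∀ x, Fn (n + 1) x = Fn n x * (1 + (-Real.log (Fn n x))))
    (hfrec : ∀ n, 1 ≤ n → ∀ x, fn (n + 1) x = (-Real.log (Fn n x)) * fn n x) :
    ∀ n, 1 ≤ n → GoodPair (Fn n) (fn n) := by
  have hF1' : Fn 1 = F := funext hF1
  have hf1' : fn 1 = f := funext hf1
  refine Nat.le_induction ?_ ?_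
  · refine ⟨?_, ?_, ?_, ?_, ?_, ?_, ?_⟩ <;> simp only [hF1', hf1']
    · exact hFpos
    · exact fun x _ => hFle x
    · exact hderiv
    · exact fun x _ => hf x
    · exact fun x y _ hxy => hFmono hxy
    · exact hfm.aemeasurable
    · exact hFlim
  · intro n hn ih
    have hFx := hFrec n hn
    have hfx := hfrec n hn
    have hFx' : Fn (n+1) = fun x => Fn n x * (1 + -Real.log (Fn n x)) := funext hFx
    have hfx' : fn (n+1) = fun x => -Real.log (Fn n x) * fn n x := funext hfx
    have hlogn : ∀ x, 0 < x → 0 ≤ -Real.log (Fn n x) := fun x hx =>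
      neg_nonneg.2 (Real.log_nonpos (ih.pos x hx).le (ih.le1 x hx))
    refine ⟨?_, ?_, ?_, ?_, ?_, ?_, ?_⟩
    · intro x hx
      rw [hFx x]
      have := hlogn x hx
      have := ih.pos x hx
      nlinarith
    · intro x hx
      rw [hFx x]
      have h := gfun_mono (ih.pos x hx) (ih.le1 x hx) le_rfl
      simp only [Real.log_one] at h
      calc Fn n x * (1 + -Real.log (Fn n x))
          = Fn n x * (1 - Real.log (Fn n x)) := by ring
        _ ≤ 1 := by linarith
    · intro x hx
      rw [hFx']
      have hne := (ih.pos x hx).ne'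
      have hlog : HasDerivAt (fun y => (1:ℝ) + -Real.log (Fn n y))
          (-(fn n x / Fn n x)) x := (((ih.deriv x hx).log hne).neg).const_add 1
      have h := (ih.deriv x hx).mul hlog
      refine h.congr_deriv ?_
      rw [hfx x]
      field_simp
      ring
    · intro x hx
      rw [hfx x]
      exact mul_nonneg (hlogn x hx) (ih.fnn x hx)
    · intro x y hx hxy
      have hy : 0 < y := lt_of_lt_of_le hx hxy
      rw [hFx x, hFx y]
      have h := gfun_mono (ih.pos x hx) (ih.mono x y hx hxy) (ih.le1 y hy)
      calc Fn n x * (1 + -Real.log (Fn n x)) = Fn n x * (1 - Real.log (Fn n x)) := by ring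
        _ ≤ Fn n y * (1 - Real.log (Fn n y)) := h
        _ = Fn n y * (1 + -Real.log (Fn n y)) := by ring
    · rw [hfx']
      have hFnm : AEMeasurable (Fn n) (volume.restrict (Ioi 0)) :=
        ih.contOn.aemeasurable measurableSet_Ioi
      exact ((Real.measurable_log.comp_aemeasurable hFnm).neg).mul ih.meas
    · rw [hFx']
      have hlog1 : Tendsto (fun x => Real.log (Fn n x)) atTop (𝓝 (Real.log 1)) :=
        (Real.continuousAt_log one_ne_zero).tendsto.comp ih.lim
      rw [Real.log_one] at hlog1
      have := ih.lim.mul ((hlog1.neg).const_add 1)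
      simpa using this


/-- With `μ̃_n(t) = (1/F_n(t)) ∫_0^t F_n(x) dx` and the pair
`(X_n, X_{n+1})` coupled via `[X_{n+1} | X_n = t] =_d [X_n | X_n ≤ t]`, so that
`E[X_n X_{n+1}] = ∫_0^∞ t (t - μ̃_n(t)) f_n(t) dt`, one has, for every `n ≥ 1`,
`Cov(X_n, X_{n+1}) = Var(X_n) - Cov(X_n, μ̃_n(X_n))`, where
`E(X_{n+1}) = E(X_n) - CE(X_n)` and `CE(X_n) = -∫_0^∞ F_n log F_n = E[μ̃_n(X_n)]`. -/
theorem seq_covariance_identity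
    (F f : ℝ → ℝ) (Fn fn : ℕ → ℝ → ℝ)
    (hFcont : Continuous F)
    (hderiv : ∀ x, 0 < x → HasDerivAt F (f x) x)
    (hf : ∀ x, 0 ≤ f x) (hfm : Measurable f)
    (hF0 : F 0 = 0)
    (hFmono : Monotone F)
    (hFpos : ∀ x, 0 < x → 0 < F x)
    (hFle : ∀ x, F x ≤ 1)
    (hFlim : Tendsto F atTop (nhds 1))
    (hF1 : ∀ x, Fn 1 x = F x)
    (hf1 : ∀ x, fn 1 x = f x)
    (hFrec : ∀ n, 1 ≤ n → ∀ x, Fn (n + 1) x = Fn n x * (1 + (-Real.log (Fn n x))))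
    (hfrec : ∀ n, 1 ≤ n → ∀ x, fn (n + 1) x = (-Real.log (Fn n x)) * fn n x)
    (hmean : ∀ n, 1 ≤ n → IntegrableOn (fun x => x * fn n x) (Ioi 0))
    (hmom2 : ∀ n, 1 ≤ n → IntegrableOn (fun x => x ^ 2 * fn n x) (Ioi 0))
    (hCE : ∀ n, 1 ≤ n → IntegrableOn (fun x => Fn n x * Real.log (Fn n x)) (Ioi 0)) :
    ∀ n, 1 ≤ n →
      -- Cov(X_n, X_{n+1}) = E[X_n X_{n+1}] - E(X_n) E(X_{n+1})
      (∫ t in Ioi 0, t * (t - (1 / Fn n t) * ∫ y in (0:ℝ)..t, Fn n y) * fn n t)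
          - (∫ t in Ioi 0, t * fn n t) *
              ((∫ t in Ioi 0, t * fn n t)
                - (-∫ x in Ioi 0, Fn n x * Real.log (Fn n x)))
        = -- Var(X_n)
          ((∫ t in Ioi 0, t ^ 2 * fn n t) - (∫ t in Ioi 0, t * fn n t) ^ 2)
            -- minus Cov(X_n, μ̃_n(X_n))
            - ((∫ t in Ioi 0, t * ((1 / Fn n t) * ∫ y in (0:ℝ)..t, Fn n y) * fn n t)
                - (∫ t in Ioi 0, t * fn n t) *
                    (∫ t in Ioi 0, ((1 / Fn n t) * ∫ y in (0:ℝ)..t, Fn n y) * fn n t)) := by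
  intro n hn
  have hg := goodpair_all F f Fn fn hderiv hf hfm hFmono hFpos hFle hFlim hF1 hf1
    hFrec hfrec n hn
  have hm := hmean n hn
  have hm2 := hmom2 n hn
  have hce := hCE n hn
  have e2 := hg.CE_eq hm hce
  have hB : IntegrableOn
      (fun t => t * ((1 / Fn n t) * ∫ y in (0:ℝ)..t, Fn n y) * fn n t) (Ioi 0) :=
    hg.tmuf_int hm2
  have e1 : (∫ t in Ioi 0, t * (t - (1 / Fn n t) * ∫ y in (0:ℝ)..t, Fn n y) * fn n t)
      = (∫ t in Ioi 0, t ^ 2 * fn n t)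
        - ∫ t in Ioi 0, t * ((1 / Fn n t) * ∫ y in (0:ℝ)..t, Fn n y) * fn n t := by
    rw [← integral_sub hm2 hB]
    exact integral_congr_ae (Filter.Eventually.of_forall fun t => by ring)
  rw [e1, e2]
  ring
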